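/- Let E be a real inner product space, let t₀ < t₁, let a : [t₀, t₁) → ℝ be continuous and nonnegative, let σ > 0 and γ ≥ 0, and let θ̂ : [t₀, t₁) → E be such that the map t ↦ ‖θ̂(t)‖² is differentiable on [t₀, t₁) with derivative w(t) satisfying w(t) ≤ −σ·a(t)·‖θ̂(t)‖² + a(t)·γ²/σ for all t ∈ [t₀, t₁). Then ‖θ̂(t)‖ ≤ ‖θ̂(t₀)‖ + γ/σ for every t ∈ [t₀, t₁). -/

import Mathlib

open Set

/-- Boundedness of the adaptive parameter estimate (from the proof of
Lemma 1). -/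
theorem adaptive_estimate_bounded
    {E : Type*} [NormedAddCommGroup E] [InnerProductSpace ℝ E]
    (t₀ t₁ : ℝ) (ht : t₀ < t₁)
    (a : ℝ → ℝ) (ha_cont : ContinuousOn a (Ico t₀ t₁))
    (ha_nonneg : ∀ t ∈ Ico t₀ t₁, 0 ≤ a t)
    (σ γ : ℝ) (hσ : 0 < σ) (hγ : 0 ≤ γ)
    (θhat : ℝ → E) (w : ℝ → ℝ)
    (hw : ∀ t ∈ Ico t₀ t₁, HasDerivAt (fun s => ‖θhat s‖ ^ 2) (w t) t)
    (hwb : ∀ t ∈ Ico t₀ t₁,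
      w t ≤ -σ * a t * ‖θhat t‖ ^ 2 + a t * γ ^ 2 / σ) :
    ∀ t ∈ Ico t₀ t₁, ‖θhat t‖ ≤ ‖θhat t₀‖ + γ / σ := by
  intro t htmem
  set V : ℝ → ℝ := fun s => ‖θhat s‖ ^ 2 with hV
  set M : ℝ := max (V t₀) ((γ / σ) ^ 2) with hM
  -- key: V t ≤ M
  have key : V t ≤ M := by
    have hsub : Icc t₀ t ⊆ Ico t₀ t₁ := fun x hx => ⟨hx.1, lt_of_le_of_lt hx.2 htmem.2⟩
    have hVcont : ContinuousOn V (Icc t₀ t) := fun x hx =>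
      ((hw x (hsub hx)).continuousAt).continuousWithinAt
    have hε : ∀ ε > (0:ℝ), V t ≤ M + ε * Real.exp t := by
      intro ε hε
      have := image_le_of_deriv_right_lt_deriv_boundary (f := V) (f' := w)
        (B := fun x => M + ε * Real.exp x) (B' := fun x => ε * Real.exp x)
        hVcont
        (fun x hx => ((hw x (hsub ⟨hx.1, le_of_lt hx.2⟩)).hasDerivWithinAt))
        (by
          show V t₀ ≤ M + ε * Real.exp t₀
          have : (0:ℝ) < ε * Real.exp t₀ := by positivity
          have hM0 : V t₀ ≤ M := le_max_left _ _
          linarith)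
        (fun x => by
          simpa using ((Real.hasDerivAt_exp x).const_mul ε).const_add M)
        ?_ (right_mem_Icc.2 htmem.1)
      · exact this
      · intro x hx hVx
        show w x < ε * Real.exp x
        have hxm : x ∈ Ico t₀ t₁ := hsub ⟨hx.1, le_of_lt hx.2⟩
        have hw' := hwb x hxm
        have ha' := ha_nonneg x hxm
        have hVge : M ≤ V x := by
          have : (0:ℝ) < ε * Real.exp x := by positivity
          rw [hVx]; linarith
        have hVgeγ : (γ / σ) ^ 2 ≤ V x := le_trans (le_max_right _ _) hVge
        have hwle : w x ≤ 0 := by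
          have h1 : a x * (γ / σ) ^ 2 ≤ a x * V x := by
            exact mul_le_mul_of_nonneg_left hVgeγ ha'
          have h2 : a x * (γ / σ) ^ 2 = a x * γ ^ 2 / σ ^ 2 := by
            field_simp
          have h3 : -σ * a x * V x + a x * γ ^ 2 / σ ≤ 0 := by
            have : a x * γ ^ 2 / σ = σ * (a x * γ ^ 2 / σ ^ 2) := by
              field_simp
            rw [this]
            nlinarith [mul_le_mul_of_nonneg_left h1 (le_of_lt hσ)]
          exact le_trans hw' h3
        have : (0:ℝ) < ε * Real.exp x := by positivity
        linarith
    have hexp : (0:ℝ) < Real.exp t := Real.exp_pos t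
    by_contra h
    push_neg at h
    have := hε ((V t - M) / (2 * Real.exp t)) (div_pos (by linarith) (by positivity))
    have : V t ≤ M + (V t - M) / 2 := by
      have heq : (V t - M) / (2 * Real.exp t) * Real.exp t = (V t - M) / 2 := by
        field_simp
      linarith [heq ▸ this]
    linarith
  -- conclude norm bound
  have hmax : ‖θhat t‖ ≤ max ‖θhat t₀‖ (γ / σ) := by
    have h1 : V t ≤ (max ‖θhat t₀‖ (γ / σ)) ^ 2 := by
      rcases max_cases (V t₀) ((γ / σ) ^ 2) with ⟨h, _⟩ | ⟨h, _⟩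
      · calc V t ≤ V t₀ := by rw [← h]; exact key
          _ ≤ _ := by
            have := le_max_left ‖θhat t₀‖ (γ / σ)
            exact pow_le_pow_left₀ (norm_nonneg _) this 2
      · calc V t ≤ (γ / σ) ^ 2 := by rw [← h]; exact key
          _ ≤ _ := by
            have := le_max_right ‖θhat t₀‖ (γ / σ)
            exact pow_le_pow_left₀ (by positivity) this 2
    have hnn : (0:ℝ) ≤ max ‖θhat t₀‖ (γ / σ) := le_max_of_le_left (norm_nonneg _)
    have h2 : ‖θhat t‖ ^ 2 ≤ (max ‖θhat t₀‖ (γ / σ)) ^ 2 := h1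
    nlinarith [h2, hnn, sq_nonneg (‖θhat t‖ + max ‖θhat t₀‖ (γ / σ))]
  calc ‖θhat t‖ ≤ max ‖θhat t₀‖ (γ / σ) := hmax
    _ ≤ ‖θhat t₀‖ + γ / σ := max_le (le_add_of_nonneg_right (by positivity)) (le_add_of_nonneg_left (norm_nonneg _))
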